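/- Monotonicity of the residuals of the fixed-point PGD: if 3Mκ ≤ 1, then along any fixed-point PGD sequence (f_n) the residual norms are non-increasing: ‖R_{n+1}‖_F ≤ ‖R_n‖_F for all n, where R_n = b − f_n − Ã(f_n). -/

import Mathlib

open Matrix Filter Topology

noncomputable section

/-- The Frobenius inner product `⟨A,B⟩_F = trace(Aᵀ B)` on real `p × q` matrices. -/
def frobInner {p q : ℕ} (A B : Matrix (Fin p) (Fin q) ℝ) : ℝ := (Aᵀ * B).trace

/-- The Frobenius norm. -/
def frobNorm {p q : ℕ} (A : Matrix (Fin p) (Fin q) ℝ) : ℝ := Real.sqrt (frobInner A A)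

/-- The rank-one matrix `r ⊗ s` with entries `(r ⊗ s)_{ij} = r i * s j`. -/
def tensor {p q : ℕ} (r : EuclideanSpace ℝ (Fin p)) (s : EuclideanSpace ℝ (Fin q)) :
    Matrix (Fin p) (Fin q) ℝ := Matrix.of fun i j => r i * s j
/-- The tensorized operator `Ã(g) = Σ_{μ} A_μ g B_μᵀ`. -/
def Atil {p q M : ℕ} (A : Fin M → Matrix (Fin p) (Fin p) ℝ)
    (B : Fin M → Matrix (Fin q) (Fin q) ℝ)
    (g : Matrix (Fin p) (Fin q) ℝ) : Matrix (Fin p) (Fin q) ℝ :=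
  ∑ μ, A μ * g * (B μ)ᵀ
variable {p q : ℕ}

lemma frobInner_eq_sum (A B : Matrix (Fin p) (Fin q) ℝ) :
    frobInner A B = ∑ i, ∑ j, A i j * B i j := by
  simp [frobInner, Matrix.trace, Matrix.diag, Matrix.mul_apply]
  rw [Finset.sum_comm]

lemma frobInner_comm (A B : Matrix (Fin p) (Fin q) ℝ) : frobInner A B = frobInner B A := by
  simp [frobInner_eq_sum, mul_comm]

lemma frobInner_sub_left (A B C : Matrix (Fin p) (Fin q) ℝ) :
    frobInner (A - B) C = frobInner A C - frobInner B C := by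
  simp [frobInner_eq_sum, sub_mul, Finset.sum_sub_distrib]

lemma frobInner_sub_right (A B C : Matrix (Fin p) (Fin q) ℝ) :
    frobInner A (B - C) = frobInner A B - frobInner A C := by
  simp [frobInner_eq_sum, mul_sub, Finset.sum_sub_distrib]

lemma frobInner_smul_right (t : ℝ) (A B : Matrix (Fin p) (Fin q) ℝ) :
    frobInner A (t • B) = t * frobInner A B := by
  simp [frobInner_eq_sum, Finset.mul_sum, Matrix.smul_apply]; ring_nf
  exact Finset.sum_congr rfl fun i _ => Finset.sum_congr rfl fun j _ => by ring

lemma frobInner_self_nonneg (A : Matrix (Fin p) (Fin q) ℝ) : 0 ≤ frobInner A A := by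
  rw [frobInner_eq_sum]
  exact Finset.sum_nonneg fun i _ => Finset.sum_nonneg fun j _ => mul_self_nonneg _

lemma frobNorm_nonneg (A : Matrix (Fin p) (Fin q) ℝ) : 0 ≤ frobNorm A := Real.sqrt_nonneg _

lemma frobNorm_sq (A : Matrix (Fin p) (Fin q) ℝ) : frobNorm A ^ 2 = frobInner A A := by
  rw [frobNorm, Real.sq_sqrt (frobInner_self_nonneg A)]

lemma frobInner_eq_sum' (A B : Matrix (Fin p) (Fin q) ℝ) :
    frobInner A B = ∑ ij : Fin p × Fin q, A ij.1 ij.2 * B ij.1 ij.2 := by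
  rw [frobInner_eq_sum, Fintype.sum_prod_type]

lemma frobInner_le (A B : Matrix (Fin p) (Fin q) ℝ) :
    frobInner A B ≤ frobNorm A * frobNorm B := by
  rw [frobInner_eq_sum', frobNorm, frobNorm, frobInner_eq_sum', frobInner_eq_sum']
  simpa [sq] using Real.sum_mul_le_sqrt_mul_sqrt Finset.univ
    (fun ij : Fin p × Fin q => A ij.1 ij.2) (fun ij => B ij.1 ij.2)

lemma abs_frobInner_le (A B : Matrix (Fin p) (Fin q) ℝ) :
    |frobInner A B| ≤ frobNorm A * frobNorm B := by
  rcases abs_cases (frobInner A B) with ⟨h, _⟩ | ⟨h, _⟩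
  · rw [h]; exact frobInner_le A B
  · rw [h]
    have := frobInner_le (-A) B
    have hn : frobInner (-A) B = -frobInner A B := by
      simp [frobInner_eq_sum, Finset.sum_neg_distrib]
    have hnn : frobNorm (-A) = frobNorm A := by
      simp [frobNorm, frobInner_eq_sum]
    rw [hn, hnn] at this; linarith

lemma frobNorm_sub_sq (A B : Matrix (Fin p) (Fin q) ℝ) :
    frobNorm (A - B) ^ 2 = frobNorm A ^ 2 - 2 * frobInner A B + frobNorm B ^ 2 := by
  rw [frobNorm_sq, frobNorm_sq, frobNorm_sq, frobInner_sub_left, frobInner_sub_right,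
    frobInner_sub_right, frobInner_comm B A]
  ring

lemma frobNorm_add_le (A B : Matrix (Fin p) (Fin q) ℝ) :
    frobNorm (A + B) ≤ frobNorm A + frobNorm B := by
  have h2 : frobNorm (A + B) ^ 2 ≤ (frobNorm A + frobNorm B) ^ 2 := by
    have e : frobNorm (A + B) ^ 2 = frobNorm A ^ 2 + 2 * frobInner A B + frobNorm B ^ 2 := by
      have h := frobNorm_sub_sq A (-B)
      have e1 : A - -B = A + B := by rw [sub_neg_eq_add]
      have e2 : frobInner A (-B) = -frobInner A B := by
        simp [frobInner_eq_sum, Finset.sum_neg_distrib]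
      have e3 : frobNorm (-B) = frobNorm B := by
        simp [frobNorm, frobInner_eq_sum]
      rw [e1, e2, e3] at h; linarith
    nlinarith [frobInner_le A B, frobNorm_nonneg A, frobNorm_nonneg B]
  calc frobNorm (A + B) = Real.sqrt (frobNorm (A + B) ^ 2) :=
        (Real.sqrt_sq (frobNorm_nonneg _)).symm
    _ ≤ Real.sqrt ((frobNorm A + frobNorm B) ^ 2) := Real.sqrt_le_sqrt h2
    _ = frobNorm A + frobNorm B :=
        Real.sqrt_sq (by have := frobNorm_nonneg A; have := frobNorm_nonneg B; linarith)

/-- Plain dot product of Euclidean vectors. -/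
def vdot {m : ℕ} (u w : EuclideanSpace ℝ (Fin m)) : ℝ := ∑ i, u i * w i

lemma vdot_comm {m : ℕ} (u w : EuclideanSpace ℝ (Fin m)) : vdot u w = vdot w u := by
  simp [vdot, mul_comm]

lemma vdot_self_nonneg {m : ℕ} (u : EuclideanSpace ℝ (Fin m)) : 0 ≤ vdot u u :=
  Finset.sum_nonneg fun i _ => mul_self_nonneg _

lemma frobInner_tensor (u w : EuclideanSpace ℝ (Fin p)) (v z : EuclideanSpace ℝ (Fin q)) :
    frobInner (tensor u v) (tensor w z) = vdot u w * vdot v z := by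
  rw [frobInner_eq_sum, vdot, vdot, Finset.sum_mul_sum]
  exact Finset.sum_congr rfl fun i _ => Finset.sum_congr rfl fun j _ => by
    simp [tensor]; ring

lemma frobNorm_tensor (u : EuclideanSpace ℝ (Fin p)) (v : EuclideanSpace ℝ (Fin q)) :
    frobNorm (tensor u v) = Real.sqrt (vdot u u) * Real.sqrt (vdot v v) := by
  rw [frobNorm, frobInner_tensor, Real.sqrt_mul (vdot_self_nonneg u)]

lemma tensor_smul_left (t : ℝ) (u : EuclideanSpace ℝ (Fin p)) (v : EuclideanSpace ℝ (Fin q)) :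
    tensor (t • u) v = t • tensor u v := by
  ext i j
  simp [tensor, Matrix.smul_apply, mul_assoc]

lemma tensor_smul_right (t : ℝ) (u : EuclideanSpace ℝ (Fin p)) (v : EuclideanSpace ℝ (Fin q)) :
    tensor u (t • v) = t • tensor u v := by
  ext i j
  simp [tensor, Matrix.smul_apply]; ring

lemma tensor_add_left (u w : EuclideanSpace ℝ (Fin p)) (v : EuclideanSpace ℝ (Fin q)) :
    tensor (u + w) v = tensor u v + tensor w v := by
  ext i j
  simp [tensor, Matrix.add_apply, add_mul]

lemma tensor_add_right (u : EuclideanSpace ℝ (Fin p)) (v z : EuclideanSpace ℝ (Fin q)) :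
    tensor u (v + z) = tensor u v + tensor u z := by
  ext i j
  simp [tensor, Matrix.add_apply, mul_add]

lemma frobInner_smul_left (t : ℝ) (A B : Matrix (Fin p) (Fin q) ℝ) :
    frobInner (t • A) B = t * frobInner A B := by
  rw [frobInner_comm, frobInner_smul_right, frobInner_comm]

lemma frobNorm_sub_smul_sq (X h : Matrix (Fin p) (Fin q) ℝ) (t : ℝ) :
    frobNorm (X - t • h) ^ 2 =
      frobNorm X ^ 2 - 2 * t * frobInner X h + t ^ 2 * frobInner h h := by
  rw [frobNorm_sub_sq, frobInner_smul_right, frobNorm_sq, frobNorm_sq, frobInner_smul_left,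
    frobInner_smul_right]
  ring

lemma frobInner_sub_self (X Y : Matrix (Fin p) (Fin q) ℝ) :
    frobInner (X - Y) (X - Y) = frobInner X X - 2 * frobInner X Y + frobInner Y Y := by
  rw [frobInner_sub_left, frobInner_sub_right, frobInner_sub_right, frobInner_comm Y X]
  ring

lemma frobInner_add_right (A B C : Matrix (Fin p) (Fin q) ℝ) :
    frobInner A (B + C) = frobInner A B + frobInner A C := by
  simp [frobInner_eq_sum, mul_add, Finset.sum_add_distrib]

lemma vdot_sub_right {m : ℕ} (u w z : EuclideanSpace ℝ (Fin m)) :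
    vdot u (w - z) = vdot u w - vdot u z := by
  simp [vdot, mul_sub, Finset.sum_sub_distrib]

lemma vdot_smul_right {m : ℕ} (t : ℝ) (u w : EuclideanSpace ℝ (Fin m)) :
    vdot u (t • w) = t * vdot u w := by
  simp [vdot, Finset.mul_sum]
  exact Finset.sum_congr rfl fun i _ => by ring

lemma vdot_sq_le {m : ℕ} (u w : EuclideanSpace ℝ (Fin m)) :
    vdot u w ^ 2 ≤ vdot u u * vdot w w := by
  have h := Finset.sum_mul_sq_le_sq_mul_sq Finset.univ (fun i => u i) (fun i => w i)
  simpa [vdot, sq] using h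

lemma abs_le_sqrt_mul {J G H : ℝ} (hG : 0 ≤ G) (h : J ^ 2 ≤ G * H) :
    |J| ≤ Real.sqrt G * Real.sqrt H := by
  calc |J| = Real.sqrt (J ^ 2) := (Real.sqrt_sq_eq_abs J).symm
    _ ≤ Real.sqrt (G * H) := Real.sqrt_le_sqrt h
    _ = Real.sqrt G * Real.sqrt H := Real.sqrt_mul hG H

section Key
variable {p q : ℕ} {R : Matrix (Fin p) (Fin q) ℝ}
  {r : EuclideanSpace ℝ (Fin p)} {s : EuclideanSpace ℝ (Fin q)}
  (hbest : ∀ (u : EuclideanSpace ℝ (Fin p)) (v : EuclideanSpace ℝ (Fin q)),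
      frobNorm (R - tensor r s) ≤ frobNorm (R - tensor u v))

include hbest

lemma best_sq (u : EuclideanSpace ℝ (Fin p)) (v : EuclideanSpace ℝ (Fin q)) :
    frobNorm (R - tensor r s) ^ 2 ≤ frobNorm (R - tensor u v) ^ 2 := by
  have h := hbest u v
  nlinarith [frobNorm_nonneg (R - tensor r s), frobNorm_nonneg (R - tensor u v)]

/-- Normal equation: `⟨R, g⟩ = ‖g‖²` for the best rank-one `g`. -/
lemma inner_R_g : frobInner R (tensor r s) = frobInner (tensor r s) (tensor r s) := by
  have h1 : frobNorm (R - tensor r s) ^ 2 = frobInner R R - 2 * frobInner R (tensor r s)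
      + frobInner (tensor r s) (tensor r s) := by
    rw [frobNorm_sub_sq, frobNorm_sq, frobNorm_sq]
  have key : ∀ t : ℝ, 0 ≤ frobInner (tensor r s) (tensor r s) * (t * t)
      + (-2 * frobInner R (tensor r s)) * t
      + (2 * frobInner R (tensor r s) - frobInner (tensor r s) (tensor r s)) := by
    intro t
    have h := best_sq hbest (t • r) s
    rw [tensor_smul_left, frobNorm_sub_smul_sq] at h
    rw [frobNorm_sq, frobInner_sub_self] at h
    rw [frobNorm_sq R] at h
    nlinarith
  have hd := discrim_le_zero key
  rw [discrim] at hd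
  nlinarith [sq_nonneg (frobInner (tensor r s) (tensor r s) - frobInner R (tensor r s))]

/-- Singular value bound: `⟨R,h⟩² ≤ ‖g‖² ‖h‖²` for every rank-one `h`. -/
lemma sv_bound (u : EuclideanSpace ℝ (Fin p)) (v : EuclideanSpace ℝ (Fin q)) :
    frobInner R (tensor u v) ^ 2 ≤
      frobInner (tensor r s) (tensor r s) * frobInner (tensor u v) (tensor u v) := by
  have hIG := inner_R_g hbest
  have h1 : frobNorm (R - tensor r s) ^ 2 = frobInner R R
      - frobInner (tensor r s) (tensor r s) := by
    rw [frobNorm_sub_sq, frobNorm_sq, frobNorm_sq, hIG]; ring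
  have key : ∀ t : ℝ, 0 ≤ frobInner (tensor u v) (tensor u v) * (t * t)
      + (-2 * frobInner R (tensor u v)) * t + frobInner (tensor r s) (tensor r s) := by
    intro t
    have h := best_sq hbest (t • u) v
    rw [tensor_smul_left, frobNorm_sub_smul_sq] at h
    rw [frobNorm_sq, frobInner_sub_self] at h
    rw [frobNorm_sq R] at h
    nlinarith [hIG]
  have hd := discrim_le_zero key
  rw [discrim] at hd
  nlinarith

/-- Stationarity in the first argument. -/
lemma stat_left (w : EuclideanSpace ℝ (Fin p)) :
    frobInner (R - tensor r s) (tensor w s) = 0 := by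
  have key : ∀ t : ℝ, 0 ≤ frobInner (tensor w s) (tensor w s) * (t * t)
      + (-2 * frobInner (R - tensor r s) (tensor w s)) * t + 0 := by
    intro t
    have h := best_sq hbest (r + t • w) s
    rw [tensor_add_left, tensor_smul_left] at h
    have e : R - (tensor r s + t • tensor w s) = (R - tensor r s) - t • tensor w s := by
      abel
    rw [e, frobNorm_sub_smul_sq] at h
    nlinarith
  have hd := discrim_le_zero key
  rw [discrim] at hd
  nlinarith

/-- Stationarity in the second argument. -/
lemma stat_right (z : EuclideanSpace ℝ (Fin q)) :
    frobInner (R - tensor r s) (tensor r z) = 0 := by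
  have key : ∀ t : ℝ, 0 ≤ frobInner (tensor r z) (tensor r z) * (t * t)
      + (-2 * frobInner (R - tensor r s) (tensor r z)) * t + 0 := by
    intro t
    have h := best_sq hbest r (s + t • z)
    rw [tensor_add_right, tensor_smul_right] at h
    have e : R - (tensor r s + t • tensor r z) = (R - tensor r s) - t • tensor r z := by
      abel
    rw [e, frobNorm_sub_smul_sq] at h
    nlinarith
  have hd := discrim_le_zero key
  rw [discrim] at hd
  nlinarith

end Key

lemma vdot_sub_smul {m : ℕ} (u r : EuclideanSpace ℝ (Fin m)) (α : ℝ) :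
    vdot (u - α • r) (u - α • r) = vdot u u - 2 * α * vdot r u + α ^ 2 * vdot r r := by
  unfold vdot
  have h : ∀ i ∈ Finset.univ, (u - α • r) i * (u - α • r) i
      = u i * u i - 2 * α * (r i * u i) + α ^ 2 * (r i * r i) := by
    intro i _
    have hi : (u - α • r) i = u i - α * r i := by simp
    rw [hi]; ring
  rw [Finset.sum_congr rfl h]
  simp [Finset.sum_add_distrib, Finset.sum_sub_distrib, Finset.mul_sum]

section Key2
variable {p q : ℕ} {R : Matrix (Fin p) (Fin q) ℝ}
  {r : EuclideanSpace ℝ (Fin p)} {s : EuclideanSpace ℝ (Fin q)}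
  (hbest : ∀ (u : EuclideanSpace ℝ (Fin p)) (v : EuclideanSpace ℝ (Fin q)),
      frobNorm (R - tensor r s) ≤ frobNorm (R - tensor u v))

include hbest

/-- Second singular value bound: `|⟨R - g, h⟩| ≤ ‖g‖ ‖h‖` for every rank-one `h`. -/
lemma sv2_bound (u : EuclideanSpace ℝ (Fin p)) (v : EuclideanSpace ℝ (Fin q)) :
    |frobInner (R - tensor r s) (tensor u v)| ≤
      frobNorm (tensor r s) * frobNorm (tensor u v) := by
  have hGg : frobInner (tensor r s) (tensor r s) = vdot r r * vdot s s := frobInner_tensor ..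
  have hRg0 : frobInner (R - tensor r s) (tensor r s) = 0 := by
    rw [frobInner_sub_left, inner_R_g hbest, sub_self]
  by_cases hG : vdot r r * vdot s s = 0
  · -- degenerate case: `g` has zero norm
    have h1 : frobInner R (tensor u v) = 0 := by
      have := sv_bound hbest u v
      rw [hGg, hG, zero_mul] at this
      nlinarith [sq_nonneg (frobInner R (tensor u v))]
    have h2 : frobInner (tensor r s) (tensor u v) = 0 := by
      have e : frobInner (tensor r s) (tensor u v) = vdot r u * vdot s v := frobInner_tensor ..
      have c1 := vdot_sq_le r u
      have c2 := vdot_sq_le s v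
      have hrr := vdot_self_nonneg r
      have hss := vdot_self_nonneg s
      have huu := vdot_self_nonneg u
      have hvv := vdot_self_nonneg v
      rcases mul_eq_zero.1 hG with h0 | h0
      · have : vdot r u = 0 := by nlinarith [sq_nonneg (vdot r u)]
        rw [e, this, zero_mul]
      · have : vdot s v = 0 := by nlinarith [sq_nonneg (vdot s v)]
        rw [e, this, mul_zero]
    rw [frobInner_sub_left, h1, h2, sub_zero, abs_zero]
    exact mul_nonneg (frobNorm_nonneg _) (frobNorm_nonneg _)
  · have hrr : 0 < vdot r r := by
      rcases (vdot_self_nonneg r).lt_or_eq with h | h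
      · exact h
      · exact absurd (by rw [← h, zero_mul]) hG
    have hss : 0 < vdot s s := by
      rcases (vdot_self_nonneg s).lt_or_eq with h | h
      · exact h
      · exact absurd (by rw [← h, mul_zero]) hG
    set α := vdot r u / vdot r r with hα
    set β := vdot s v / vdot s s with hβ
    set u' := u - α • r with hu'
    set v' := v - β • s with hv'
    have hru' : vdot r u' = 0 := by
      rw [hu', vdot_sub_right, vdot_smul_right, hα]
      field_simp [vdot_comm r u]
      ring
    have hsv' : vdot s v' = 0 := by
      rw [hv', vdot_sub_right, vdot_smul_right, hβ]
      field_simp [vdot_comm s v]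
      ring
    -- decomposition of the tensor
    have hu : u = u' + α • r := by rw [hu']; abel
    have hv : v = v' + β • s := by rw [hv']; abel
    have hdec : tensor u v = tensor u' v' + β • tensor u' s + α • tensor r v'
        + (α * β) • tensor r s := by
      rw [hu, hv]
      ext i j
      simp only [tensor, Matrix.of_apply, Matrix.add_apply, Matrix.smul_apply,
        PiLp.add_apply, PiLp.smul_apply, smul_eq_mul]
      ring
    have hmain : frobInner (R - tensor r s) (tensor u v) = frobInner R (tensor u' v') := by
      rw [hdec, frobInner_add_right, frobInner_add_right, frobInner_add_right,
        frobInner_smul_right, frobInner_smul_right, frobInner_smul_right,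
        stat_left hbest u', stat_right hbest v', hRg0]
      have : frobInner (R - tensor r s) (tensor u' v')
          = frobInner R (tensor u' v') - frobInner (tensor r s) (tensor u' v') := by
        rw [frobInner_sub_left]
      rw [this, frobInner_tensor, hru', hsv', zero_mul, mul_zero, mul_zero, mul_zero]
      ring
    -- bound
    have hb := sv_bound hbest u' v'
    have habs : |frobInner R (tensor u' v')| ≤
        frobNorm (tensor r s) * frobNorm (tensor u' v') := by
      have := abs_le_sqrt_mul (frobInner_self_nonneg (tensor r s)) hb
      simpa [frobNorm] using this
    have hmono : frobNorm (tensor u' v') ≤ frobNorm (tensor u v) := by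
      rw [frobNorm_tensor, frobNorm_tensor]
      have hu'le : vdot u' u' ≤ vdot u u := by
        have e : vdot u' u' = vdot u u - vdot r u ^ 2 / vdot r r := by
          rw [hu', vdot_sub_smul, hα]
          field_simp
          ring
        have : 0 ≤ vdot r u ^ 2 / vdot r r := by positivity
        linarith [e]
      have hv'le : vdot v' v' ≤ vdot v v := by
        have e : vdot v' v' = vdot v v - vdot s v ^ 2 / vdot s s := by
          rw [hv', vdot_sub_smul, hβ]
          field_simp
          ring
        have : 0 ≤ vdot s v ^ 2 / vdot s s := by positivity
        linarith [e]
      exact mul_le_mul (Real.sqrt_le_sqrt hu'le) (Real.sqrt_le_sqrt hv'le)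
        (Real.sqrt_nonneg _) (Real.sqrt_nonneg _)
    calc |frobInner (R - tensor r s) (tensor u v)| = |frobInner R (tensor u' v')| := by
          rw [hmain]
      _ ≤ frobNorm (tensor r s) * frobNorm (tensor u' v') := habs
      _ ≤ frobNorm (tensor r s) * frobNorm (tensor u v) :=
          mul_le_mul_of_nonneg_left hmono (frobNorm_nonneg _)

end Key2

lemma Atil_add {p q M : ℕ} (A : Fin M → Matrix (Fin p) (Fin p) ℝ)
    (B : Fin M → Matrix (Fin q) (Fin q) ℝ) (X Y : Matrix (Fin p) (Fin q) ℝ) :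
    Atil A B (X + Y) = Atil A B X + Atil A B Y := by
  simp [Atil, Matrix.mul_add, Matrix.add_mul, Finset.sum_add_distrib]

lemma mul_tensor {p q : ℕ} (A' : Matrix (Fin p) (Fin p) ℝ) (B' : Matrix (Fin q) (Fin q) ℝ)
    (u : EuclideanSpace ℝ (Fin p)) (v : EuclideanSpace ℝ (Fin q)) :
    A' * tensor u v * B'ᵀ = tensor (WithLp.toLp 2 (A' *ᵥ u)) (WithLp.toLp 2 (B' *ᵥ v)) := by
  ext i j
  simp only [tensor, Matrix.of_apply, Matrix.mul_apply, Matrix.transpose_apply,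
    PiLp.toLp_apply, Matrix.mulVec, dotProduct, Finset.sum_mul, Finset.mul_sum]
  exact Finset.sum_congr rfl fun k _ => Finset.sum_congr rfl fun l _ => by ring

lemma frobInner_sum_right' {p q : ℕ} {ι : Type*} (t : Finset ι)
    (X : Matrix (Fin p) (Fin q) ℝ) (f : ι → Matrix (Fin p) (Fin q) ℝ) :
    frobInner X (∑ μ ∈ t, f μ) = ∑ μ ∈ t, frobInner X (f μ) := by
  induction t using Finset.cons_induction with
  | empty => simp [frobInner_eq_sum]
  | cons a t ha ih => rw [Finset.sum_cons, Finset.sum_cons, frobInner_add_right, ih]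

lemma frobNorm_zero {p q : ℕ} : frobNorm (0 : Matrix (Fin p) (Fin q) ℝ) = 0 := by
  simp [frobNorm, frobInner_eq_sum]

lemma frobNorm_sum_le' {p q : ℕ} {ι : Type*} (t : Finset ι)
    (f : ι → Matrix (Fin p) (Fin q) ℝ) :
    frobNorm (∑ μ ∈ t, f μ) ≤ ∑ μ ∈ t, frobNorm (f μ) := by
  induction t using Finset.cons_induction with
  | empty => simp [frobNorm_zero]
  | cons a t ha ih =>
      rw [Finset.sum_cons, Finset.sum_cons]
      exact (frobNorm_add_le _ _).trans (by linarith)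

/-- The one-step contraction estimate. -/
lemma key_step {p q M : ℕ} (A : Fin M → Matrix (Fin p) (Fin p) ℝ)
    (B : Fin M → Matrix (Fin q) (Fin q) ℝ) (κ : ℝ) (hκ0 : 0 ≤ κ)
    (hκ : ∀ (μ : Fin M) (g : Matrix (Fin p) (Fin q) ℝ),
      frobNorm (A μ * g * (B μ)ᵀ) ≤ κ * frobNorm g)
    (hcond : 3 * M * κ ≤ 1)
    (R : Matrix (Fin p) (Fin q) ℝ)
    (r : EuclideanSpace ℝ (Fin p)) (s : EuclideanSpace ℝ (Fin q))
    (hbest : ∀ (u : EuclideanSpace ℝ (Fin p)) (v : EuclideanSpace ℝ (Fin q)),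
      frobNorm (R - tensor r s) ≤ frobNorm (R - tensor u v)) :
    frobNorm (R - tensor r s - Atil A B (tensor r s)) ≤ frobNorm R := by
  have hGnn : 0 ≤ frobInner (tensor r s) (tensor r s) := frobInner_self_nonneg _
  have hgnn : 0 ≤ frobNorm (tensor r s) := frobNorm_nonneg _
  have hg2 : frobNorm (tensor r s) ^ 2 = frobInner (tensor r s) (tensor r s) := frobNorm_sq _
  -- norm of T
  have hT : frobNorm (Atil A B (tensor r s)) ≤ M * κ * frobNorm (tensor r s) := by
    calc frobNorm (Atil A B (tensor r s))
        ≤ ∑ μ : Fin M, frobNorm (A μ * tensor r s * (B μ)ᵀ) := frobNorm_sum_le' _ _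
      _ ≤ ∑ _μ : Fin M, κ * frobNorm (tensor r s) :=
          Finset.sum_le_sum fun μ _ => hκ μ (tensor r s)
      _ = M * κ * frobNorm (tensor r s) := by
          rw [Finset.sum_const, Finset.card_univ, Fintype.card_fin, nsmul_eq_mul]; ring
  -- cross term
  have hcross : -(M * κ * frobInner (tensor r s) (tensor r s)) ≤
      frobInner (R - tensor r s) (Atil A B (tensor r s)) := by
    rw [Atil, frobInner_sum_right']
    calc -(M * κ * frobInner (tensor r s) (tensor r s))
        = ∑ _μ : Fin M, -(κ * frobInner (tensor r s) (tensor r s)) := by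
          rw [Finset.sum_const, Finset.card_univ, Fintype.card_fin, nsmul_eq_mul]; ring
      _ ≤ ∑ μ : Fin M, frobInner (R - tensor r s) (A μ * tensor r s * (B μ)ᵀ) := by
          apply Finset.sum_le_sum
          intro μ _
          have h1 : |frobInner (R - tensor r s) (A μ * tensor r s * (B μ)ᵀ)| ≤
              frobNorm (tensor r s) * frobNorm (A μ * tensor r s * (B μ)ᵀ) := by
            rw [mul_tensor]
            exact sv2_bound hbest _ _
          have h2 := hκ μ (tensor r s)
          have h3 : frobNorm (tensor r s) * frobNorm (A μ * tensor r s * (B μ)ᵀ) ≤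
              κ * frobInner (tensor r s) (tensor r s) := by
            calc frobNorm (tensor r s) * frobNorm (A μ * tensor r s * (B μ)ᵀ)
                ≤ frobNorm (tensor r s) * (κ * frobNorm (tensor r s)) :=
                  mul_le_mul_of_nonneg_left h2 hgnn
              _ = κ * frobInner (tensor r s) (tensor r s) := by rw [← hg2]; ring
          have := neg_abs_le (frobInner (R - tensor r s) (A μ * tensor r s * (B μ)ᵀ))
          linarith
  -- residual norm
  have hRg : frobNorm (R - tensor r s) ^ 2 =
      frobNorm R ^ 2 - frobInner (tensor r s) (tensor r s) := by
    rw [frobNorm_sub_sq, inner_R_g hbest, frobNorm_sq, hg2]; ring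
  have hexp : frobNorm (R - tensor r s - Atil A B (tensor r s)) ^ 2 =
      frobNorm (R - tensor r s) ^ 2
        - 2 * frobInner (R - tensor r s) (Atil A B (tensor r s))
        + frobNorm (Atil A B (tensor r s)) ^ 2 := frobNorm_sub_sq _ _
  have hMκ : 0 ≤ (M : ℝ) * κ := mul_nonneg (Nat.cast_nonneg M) hκ0
  have hcond' : 3 * ((M : ℝ) * κ) ≤ 1 := by linarith [hcond]
  have hT2 : frobNorm (Atil A B (tensor r s)) ^ 2 ≤
      ((M : ℝ) * κ) ^ 2 * frobInner (tensor r s) (tensor r s) := by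
    have hTnn := frobNorm_nonneg (Atil A B (tensor r s))
    nlinarith [hT]
  have hfinal : frobNorm (R - tensor r s - Atil A B (tensor r s)) ^ 2 ≤ frobNorm R ^ 2 := by
    rw [hexp, hRg]
    nlinarith [hcross, hT2, hGnn, hMκ, hcond']
  calc frobNorm (R - tensor r s - Atil A B (tensor r s))
      = Real.sqrt (frobNorm (R - tensor r s - Atil A B (tensor r s)) ^ 2) :=
        (Real.sqrt_sq (frobNorm_nonneg _)).symm
    _ ≤ Real.sqrt (frobNorm R ^ 2) := Real.sqrt_le_sqrt hfinal
    _ = frobNorm R := Real.sqrt_sq (frobNorm_nonneg _)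

/-- Monotonicity of the residuals of the fixed-point PGD: if `3Mκ ≤ 1`, along any
fixed-point PGD sequence the residual norms `‖R_n‖_F` are non-increasing. -/
theorem stmt_11 {p q M : ℕ} (hp : 1 ≤ p) (hq : 1 ≤ q) (hM : 1 ≤ M)
    (A : Fin M → Matrix (Fin p) (Fin p) ℝ) (B : Fin M → Matrix (Fin q) (Fin q) ℝ)
    (κ : ℝ) (hκ0 : 0 ≤ κ)
    (hκ : ∀ (μ : Fin M) (g : Matrix (Fin p) (Fin q) ℝ),
      frobNorm (A μ * g * (B μ)ᵀ) ≤ κ * frobNorm g)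
    (hcond : 3 * M * κ ≤ 1)
    (b g₀ : Matrix (Fin p) (Fin q) ℝ)
    (f : ℕ → Matrix (Fin p) (Fin q) ℝ)
    (r : ℕ → EuclideanSpace ℝ (Fin p)) (s : ℕ → EuclideanSpace ℝ (Fin q))
    (Rres : ℕ → Matrix (Fin p) (Fin q) ℝ)
    (hR : ∀ n, Rres n = b - f n - Atil A B (f n))
    (hf0 : f 0 = g₀)
    (hstep : ∀ n, f (n + 1) = f n + tensor (r n) (s n))
    (hbest : ∀ (n : ℕ) (u : EuclideanSpace ℝ (Fin p)) (v : EuclideanSpace ℝ (Fin q)),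
      frobNorm (Rres n - tensor (r n) (s n)) ≤ frobNorm (Rres n - tensor u v)) :
    ∀ n, frobNorm (Rres (n + 1)) ≤ frobNorm (Rres n) := by
  intro n
  have hres : Rres (n + 1) = Rres n - tensor (r n) (s n) - Atil A B (tensor (r n) (s n)) := by
    rw [hR (n + 1), hR n, hstep n, Atil_add]
    abel
  have hbest' : ∀ (u : EuclideanSpace ℝ (Fin p)) (v : EuclideanSpace ℝ (Fin q)),
      frobNorm (Rres n - tensor (r n) (s n)) ≤ frobNorm (Rres n - tensor u v) := hbest n
  rw [hres]
  exact key_step A B κ hκ0 hκ hcond (Rres n) (r n) (s n) hbest'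

end
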